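/- Let $q > 1/2$ be real with $q \ne 1$, let $L > 0$, let $(\ell_j)_{j \ge 1}$ be a nondecreasing sequence of strictly positive reals such that both series $\sum_{j=1}^\infty \ell_j^{-2q}$ and $\sum_{j=1}^\infty \ell_j^{-2}$ converge, and let $\epsilon : \mathbb{N} \to (0,\infty)$ satisfy $\epsilon(v)\,\ell_v \to 0$ as $v \to \infty$. Define $\zeta_{G,v}(s) = \sum_{j=1}^v \big(\ell_j/(L+\epsilon(v)\ell_j)\big)^{-s}$, the finite graph zeta function, and $D_{q}(v) = \frac{\log \zeta_{G,v}(2q) - q\,\log\zeta_{G,v}(2)}{1-q}$. Then $\lim_{v\to\infty} D_q(v) = \frac{\log \zeta_G(2q) - q\,\log \zeta_G(2)}{1-q}$, where $\zeta_G(s) = \sum_{j=1}^\infty \ell_j^{-s}$. -/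
import Mathlib

open Filter Real

/-- the `v → ∞` limit of the ground-state fractal exponent
(Theorem 2.3, second part). The series `∑_{j=1}^∞ ℓ_j^{-s}` is written as a
`tsum` over `j : ℕ` of `ℓ (j+1) ^ (-s)`. -/
theorem ground_state_fractal_exponent_limit
    (q : ℝ) (hq : 1/2 < q) (hq1 : q ≠ 1) (L : ℝ) (hL : 0 < L)
    (ℓ : ℕ → ℝ) (hpos : ∀ j, 1 ≤ j → 0 < ℓ j)
    (hmono : ∀ j, 1 ≤ j → ℓ j ≤ ℓ (j+1))
    (hsum2q : Summable (fun j : ℕ => ℓ (j+1) ^ (-(2*q))))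
    (hsum2 : Summable (fun j : ℕ => ℓ (j+1) ^ (-(2:ℝ))))
    (ε : ℕ → ℝ) (hε : ∀ v, 0 < ε v)
    (hεℓ : Filter.Tendsto (fun v => ε v * ℓ v) Filter.atTop (nhds 0))
    (ζv : ℕ → ℝ → ℝ)
    (hζv : ∀ v s, ζv v s = ∑ j ∈ Finset.Icc 1 v, (ℓ j / (L + ε v * ℓ j)) ^ (-s))
    (D : ℕ → ℝ)
    (hD : ∀ v, D v = (Real.log (ζv v (2*q)) - q * Real.log (ζv v 2)) / (1-q)) :
    Filter.Tendsto D Filter.atTop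
      (nhds ((Real.log (∑' j : ℕ, ℓ (j+1) ^ (-(2*q)))
        - q * Real.log (∑' j : ℕ, ℓ (j+1) ^ (-(2:ℝ)))) / (1-q))) := by
  have hmono' : ∀ a b : ℕ, 1 ≤ a → a ≤ b → ℓ a ≤ ℓ b := by
    intro a b ha hab
    induction b, hab using Nat.le_induction with
    | base => exact le_refl _
    | succ n hn ih => exact ih.trans (hmono n (ha.trans hn))
  -- key convergence lemma
  have key : ∀ s : ℝ, 0 < s → ∀ hsum : Summable (fun j : ℕ => ℓ (j+1) ^ (-s)),
      Tendsto (fun v => ζv v s) atTop (nhds (L ^ s * ∑' j : ℕ, ℓ (j+1) ^ (-s))) := by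
    intro s hs hsum
    set T := ∑' j : ℕ, ℓ (j+1) ^ (-s) with hT
    have hS : Tendsto (fun v => ∑ j ∈ Finset.range v, ℓ (j+1) ^ (-s)) atTop (nhds T) :=
      hsum.hasSum.tendsto_sum_nat
    have hIcc : ∀ v : ℕ, ∑ j ∈ Finset.Icc 1 v, ℓ j ^ (-s)
        = ∑ j ∈ Finset.range v, ℓ (j+1) ^ (-s) := by
      intro v
      induction v with
      | zero => simp
      | succ n ih =>
        rw [Finset.sum_Icc_succ_top (by omega), Finset.sum_range_succ, ih]
    have hlow : Tendsto (fun v => L ^ s * ∑ j ∈ Finset.Icc 1 v, ℓ j ^ (-s)) atTop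
        (nhds (L ^ s * T)) := by
      simpa only [hIcc] using hS.const_mul (L ^ s)
    have hupL : Tendsto (fun v => (L + ε v * ℓ v) ^ s) atTop (nhds (L ^ s)) := by
      have h0 : Tendsto (fun v => L + ε v * ℓ v) atTop (nhds (L + 0)) :=
        tendsto_const_nhds.add hεℓ
      rw [add_zero] at h0
      exact h0.rpow tendsto_const_nhds (Or.inl (ne_of_gt hL))
    have hup : Tendsto (fun v => (L + ε v * ℓ v) ^ s * ∑ j ∈ Finset.Icc 1 v, ℓ j ^ (-s))
        atTop (nhds (L ^ s * T)) := by
      simpa only [hIcc] using hupL.mul hS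
    refine tendsto_of_tendsto_of_tendsto_of_le_of_le hlow hup ?_ ?_
    · -- lower bound
      intro v
      dsimp only
      rw [hζv, Finset.mul_sum]
      refine Finset.sum_le_sum fun j hj => ?_
      obtain ⟨hj1, hjv⟩ := Finset.mem_Icc.mp hj
      have hℓj : 0 < ℓ j := hpos j hj1
      have hb : 0 < L + ε v * ℓ j := add_pos hL (mul_pos (hε v) hℓj)
      have hterm : (ℓ j / (L + ε v * ℓ j)) ^ (-s) = (L + ε v * ℓ j) ^ s * ℓ j ^ (-s) := by
        rw [Real.div_rpow hℓj.le hb.le, Real.rpow_neg hℓj.le, Real.rpow_neg hb.le,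
          div_eq_mul_inv, inv_inv]
        ring
      rw [hterm]
      have : L ^ s ≤ (L + ε v * ℓ j) ^ s :=
        Real.rpow_le_rpow hL.le (by nlinarith [(hε v).le, hℓj.le, mul_nonneg (hε v).le hℓj.le]) hs.le
      exact mul_le_mul_of_nonneg_right this (Real.rpow_nonneg hℓj.le _)
    · -- upper bound
      intro v
      dsimp only
      rw [hζv, Finset.mul_sum]
      refine Finset.sum_le_sum fun j hj => ?_
      obtain ⟨hj1, hjv⟩ := Finset.mem_Icc.mp hj
      have hℓj : 0 < ℓ j := hpos j hj1
      have hb : 0 < L + ε v * ℓ j := add_pos hL (mul_pos (hε v) hℓj)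
      have hterm : (ℓ j / (L + ε v * ℓ j)) ^ (-s) = (L + ε v * ℓ j) ^ s * ℓ j ^ (-s) := by
        rw [Real.div_rpow hℓj.le hb.le, Real.rpow_neg hℓj.le, Real.rpow_neg hb.le,
          div_eq_mul_inv, inv_inv]
        ring
      rw [hterm]
      have hle : ℓ j ≤ ℓ v := hmono' j v hj1 hjv
      have : (L + ε v * ℓ j) ^ s ≤ (L + ε v * ℓ v) ^ s := by
        apply Real.rpow_le_rpow hb.le _ hs.le
        have := mul_le_mul_of_nonneg_left hle (hε v).le
        linarith
      exact mul_le_mul_of_nonneg_right this (Real.rpow_nonneg hℓj.le _)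
  -- positivity of the tsums
  have hpos' : ∀ s : ℝ, ∀ hsum : Summable (fun j : ℕ => ℓ (j+1) ^ (-s)),
      0 < ∑' j : ℕ, ℓ (j+1) ^ (-s) := by
    intro s hsum
    refine Summable.tsum_pos hsum (fun i => Real.rpow_nonneg (hpos (i+1) (Nat.le_add_left 1 i)).le _) 0 ?_
    exact Real.rpow_pos_of_pos (hpos 1 le_rfl) _
  set T1 := ∑' j : ℕ, ℓ (j+1) ^ (-(2*q)) with hT1
  set T2 := ∑' j : ℕ, ℓ (j+1) ^ (-(2:ℝ)) with hT2
  have hT1pos : 0 < T1 := hpos' (2*q) hsum2q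
  have hT2pos : 0 < T2 := hpos' 2 hsum2
  have h2q : (0:ℝ) < 2*q := by linarith
  have h1 : Tendsto (fun v => ζv v (2*q)) atTop (nhds (L ^ (2*q) * T1)) := key (2*q) h2q hsum2q
  have h2 : Tendsto (fun v => ζv v 2) atTop (nhds (L ^ (2:ℝ) * T2)) := key 2 (by norm_num) hsum2
  have hlog1 : Tendsto (fun v => Real.log (ζv v (2*q))) atTop
      (nhds (Real.log (L ^ (2*q) * T1))) :=
    h1.log (by positivity)
  have hlog2 : Tendsto (fun v => Real.log (ζv v 2)) atTop
      (nhds (Real.log (L ^ (2:ℝ) * T2))) :=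
    h2.log (by positivity)
  have hcomb : Tendsto D atTop
      (nhds ((Real.log (L ^ (2*q) * T1) - q * Real.log (L ^ (2:ℝ) * T2)) / (1-q))) := by
    have := (hlog1.sub (hlog2.const_mul q)).div_const (1-q)
    have hDfun : D = fun v => (Real.log (ζv v (2*q)) - q * Real.log (ζv v 2)) / (1-q) :=
      funext hD
    rw [hDfun]
    exact this
  have heq : (Real.log (L ^ (2*q) * T1) - q * Real.log (L ^ (2:ℝ) * T2)) / (1-q)
      = (Real.log T1 - q * Real.log T2) / (1-q) := by
    rw [Real.log_mul (by positivity) (ne_of_gt hT1pos),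
      Real.log_mul (by positivity) (ne_of_gt hT2pos),
      Real.log_rpow hL, Real.log_rpow hL]
    ring
  rw [← heq]
  exact hcomb
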